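/- (Orthogonality of first-kind family) Let β > 1 be real, p(t) = (t⁴ − 2βt² + 1)/(β² − 1), a₁(t) = (t² − 1)/√(2(β−1)), b₀ = √((β+1)/2), and let aₙ be defined by aₙ + bₙ₋₁√p = (a₁ + b₀√p)ⁿ. Then ∫ from t = (√(β+1) − √(β−1))/√2 to (√(β+1) + √(β−1))/√2 of t^{−n−m−1}·aₙ(t)·aₘ(t)·(t²+1)·√((1−β)/(t⁴ − 2βt² + 1)) dt equals 0 if n ≠ m, π√(β−1) if n = m = 0, and (π/2)√(β−1) if n = m ≠ 0. -/

import Mathlib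

open Polynomial intervalIntegral Set MeasureTheory

noncomputable def phi (β θ : ℝ) : ℝ :=
  (Real.sqrt (2*(β-1)) * Real.cos θ + Real.sqrt ((Real.sqrt (2*(β-1)) * Real.cos θ)^2 + 4))/2
lemma phi_pos (β θ : ℝ) : 0 < phi β θ := by
  unfold phi
  have h1 : |Real.sqrt (2*(β-1)) * Real.cos θ| < Real.sqrt ((Real.sqrt (2*(β-1)) * Real.cos θ)^2 + 4) := by
    rw [← Real.sqrt_sq_eq_abs]
    exact Real.sqrt_lt_sqrt (sq_nonneg _) (by nlinarith)
  have := abs_lt.1 h1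
  linarith [this.1]
lemma phi_sq (β θ : ℝ) :
    (phi β θ)^2 = Real.sqrt (2*(β-1)) * Real.cos θ * phi β θ + 1 := by
  have h : (Real.sqrt ((Real.sqrt (2*(β-1)) * Real.cos θ)^2 + 4))^2
      = (Real.sqrt (2*(β-1)) * Real.cos θ)^2 + 4 :=
    Real.sq_sqrt (by positivity)
  unfold phi; nlinarith [h]
lemma phi_key (β θ : ℝ) : phi β θ - 1/(phi β θ) = Real.sqrt (2*(β-1)) * Real.cos θ := by
  have hp := phi_pos β θ
  have hs := phi_sq β θ
  set K := Real.sqrt (2*(β-1))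
  field_simp
  nlinarith [hs]
lemma sub_inv_lt {u v : ℝ} (hu : 0 < u) (h : u < v) : u - 1/u < v - 1/v := by
  have hv : 0 < v := lt_trans hu h
  have : 1/v < 1/u := one_div_lt_one_div_of_lt hu h
  linarith
lemma sub_inv_inj {u v : ℝ} (hu : 0 < u) (hv : 0 < v) (h : u - 1/u = v - 1/v) : u = v := by
  rcases lt_trichotomy u v with h'|h'|h'
  · exact absurd h (ne_of_lt (sub_inv_lt hu h'))
  · exact h'
  · exact absurd h.symm (ne_of_lt (sub_inv_lt hv h'))
lemma phi_char {β : ℝ} (θ : ℝ) {t : ℝ} (ht : 0 < t)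
    (h : t - 1/t = Real.sqrt (2*(β-1)) * Real.cos θ) : t = phi β θ := by
  exact sub_inv_inj ht (phi_pos β θ) (h.trans (phi_key β θ).symm)

noncomputable def phider (β θ : ℝ) : ℝ :=
  -(Real.sqrt (2*(β-1)) * Real.sin θ) * (phi β θ)^2 / ((phi β θ)^2 + 1)


lemma tp_pos {β : ℝ} (hβ : 1 < β) :
    0 < (Real.sqrt (β+1) + Real.sqrt (β-1)) / Real.sqrt 2 := by
  have h1 : 0 < Real.sqrt (β+1) := Real.sqrt_pos.2 (by linarith)
  have h2 : 0 ≤ Real.sqrt (β-1) := Real.sqrt_nonneg _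
  positivity

lemma tm_pos {β : ℝ} (hβ : 1 < β) :
    0 < (Real.sqrt (β+1) - Real.sqrt (β-1)) / Real.sqrt 2 := by
  have h1 : Real.sqrt (β-1) < Real.sqrt (β+1) := Real.sqrt_lt_sqrt (by linarith) (by linarith)
  have h2 : (0:ℝ) < Real.sqrt 2 := by positivity
  exact div_pos (by linarith) h2

lemma tm_mul_tp {β : ℝ} (hβ : 1 < β) :
    ((Real.sqrt (β+1) - Real.sqrt (β-1)) / Real.sqrt 2) *
    ((Real.sqrt (β+1) + Real.sqrt (β-1)) / Real.sqrt 2) = 1 := by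
  have h1 : Real.sqrt (β+1)^2 = β+1 := Real.sq_sqrt (by linarith)
  have h2 : Real.sqrt (β-1)^2 = β-1 := Real.sq_sqrt (by linarith)
  have h3 : Real.sqrt 2^2 = 2 := Real.sq_sqrt (by norm_num)
  have h4 : Real.sqrt 2 ≠ 0 := by positivity
  field_simp
  nlinarith [h1, h2, h3]

lemma tp_sub_tm {β : ℝ} (hβ : 1 < β) :
    ((Real.sqrt (β+1) + Real.sqrt (β-1)) / Real.sqrt 2) -
    ((Real.sqrt (β+1) - Real.sqrt (β-1)) / Real.sqrt 2) = Real.sqrt (2*(β-1)) := by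
  have h2 : (0:ℝ) ≤ 2 := by norm_num
  rw [show (2:ℝ)*(β-1) = (β-1)*2 by ring, Real.sqrt_mul (by linarith : (0:ℝ) ≤ β-1)]
  have h4 : Real.sqrt 2 ≠ 0 := by positivity
  have h3 : Real.sqrt 2^2 = 2 := Real.sq_sqrt (by norm_num)
  field_simp
  linear_combination (-Real.sqrt (β-1)) * h3

lemma phi_zero {β : ℝ} (hβ : 1 < β) :
    phi β 0 = (Real.sqrt (β+1) + Real.sqrt (β-1)) / Real.sqrt 2 := by
  symm
  apply phi_char 0 (tp_pos hβ)
  rw [Real.cos_zero, mul_one]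
  have h := tm_mul_tp hβ
  have htp := tp_pos hβ
  have : 1 / ((Real.sqrt (β+1) + Real.sqrt (β-1)) / Real.sqrt 2)
      = (Real.sqrt (β+1) - Real.sqrt (β-1)) / Real.sqrt 2 :=
    (eq_one_div_of_mul_eq_one_left h).symm
  rw [this]; exact tp_sub_tm hβ

lemma phi_pi {β : ℝ} (hβ : 1 < β) :
    phi β Real.pi = (Real.sqrt (β+1) - Real.sqrt (β-1)) / Real.sqrt 2 := by
  symm
  apply phi_char Real.pi (tm_pos hβ)
  rw [Real.cos_pi]
  have h := tm_mul_tp hβ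
  have htm := tm_pos hβ
  have : 1 / ((Real.sqrt (β+1) - Real.sqrt (β-1)) / Real.sqrt 2)
      = (Real.sqrt (β+1) + Real.sqrt (β-1)) / Real.sqrt 2 :=
    (eq_one_div_of_mul_eq_one_left (by rw [mul_comm]; exact h)).symm
  rw [this]
  have := tp_sub_tm hβ
  linarith

lemma quartic_phi {β : ℝ} (hβ : 1 < β) (θ : ℝ) :
    (phi β θ)^4 - 2*β*(phi β θ)^2 + 1 = -(2*(β-1)*(phi β θ)^2*(Real.sin θ)^2) := by
  have hs := phi_sq β θ
  have hK : (Real.sqrt (2*(β-1)))^2 = 2*(β-1) := Real.sq_sqrt (by nlinarith)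
  have hsc : (Real.sin θ)^2 = 1 - (Real.cos θ)^2 := by
    have := Real.sin_sq_add_cos_sq θ; linarith
  linear_combination (2*(β-1)*(phi β θ)^2) * hsc + ((Real.cos θ)^2*(phi β θ)^2) * hK
    + ((phi β θ)^2 + Real.sqrt (2*(β-1))*Real.cos θ*(phi β θ) - 1) * hs



lemma phi_hasDeriv (β θ : ℝ) : HasDerivAt (phi β) (phider β θ) θ := by
  set K := Real.sqrt (2*(β-1)) with hK
  have hgpos : (0:ℝ) < (K*Real.cos θ)^2 + 4 := by positivity
  have hh : HasDerivAt (fun θ => K * Real.cos θ) (K * -Real.sin θ) θ :=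
    (Real.hasDerivAt_cos θ).const_mul K
  have hg : HasDerivAt (fun θ => (K * Real.cos θ)^2 + 4)
      (2 * (K*Real.cos θ)^1 * (K * -Real.sin θ)) θ := by
    simpa using (hh.pow 2).add_const 4
  have hsq : HasDerivAt (fun θ => Real.sqrt ((K * Real.cos θ)^2 + 4))
      (1/(2*Real.sqrt ((K*Real.cos θ)^2+4)) * (2*(K*Real.cos θ)^1*(K * -Real.sin θ))) θ :=
    (Real.hasDerivAt_sqrt hgpos.ne').comp θ hg
  have hphi : HasDerivAt (phi β)
      ((K * -Real.sin θ + 1/(2*Real.sqrt ((K*Real.cos θ)^2+4)) * (2*(K*Real.cos θ)^1*(K * -Real.sin θ)))/2) θ := by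
    unfold phi
    exact (hh.add hsq).div_const 2
  convert hphi using 1
  set S := Real.sqrt ((K*Real.cos θ)^2+4) with hS
  have hphidef : phi β θ = (K * Real.cos θ + S)/2 := rfl
  have hSval : S = 2 * phi β θ - K * Real.cos θ := by rw [hphidef]; ring
  have hSpos : 0 < S := Real.sqrt_pos.2 hgpos
  have hp2 := phi_sq β θ
  have hppos := phi_pos β θ
  have h1 : (phi β θ)^2 + 1 ≠ 0 := by positivity
  have h2 : 2 * phi β θ - K * Real.cos θ > 0 := hSval ▸ hSpos
  rw [phider.eq_1, hSval, ← hK] at *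
  have h2' : phi β θ * 2 - K * Real.cos θ ≠ 0 := by intro hc; linarith
  field_simp
  linear_combination (-2*K*Real.sin θ*phi β θ) * hp2

lemma integral_cos_smul (k : ℝ) (hk : k ≠ 0) :
    ∫ x in (0:ℝ)..Real.pi, Real.cos (k*x) = Real.sin (k*Real.pi)/k := by
  have hder : ∀ x ∈ Set.uIcc (0:ℝ) Real.pi, HasDerivAt (fun x => Real.sin (k*x)/k) (Real.cos (k*x)) x := by
    intro x _
    have h1 : HasDerivAt (fun x : ℝ => k*x) k x := by
      simpa using (hasDerivAt_id x).const_mul k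
    have h2 := ((Real.hasDerivAt_sin (k*x)).comp x h1).div_const k
    have : Real.cos (k*x) * k / k = Real.cos (k*x) := by field_simp
    rw [← this]
    exact h2
  rw [intervalIntegral.integral_eq_sub_of_hasDerivAt hder
    ((Real.continuous_cos.comp (continuous_const.mul continuous_id)).intervalIntegrable 0 Real.pi)]
  simp

lemma integral_coscos (n m : ℕ) :
    ∫ θ in (0:ℝ)..Real.pi, Real.cos (n*θ) * Real.cos (m*θ)
      = if n = m then (if n = 0 then Real.pi else Real.pi/2) else 0 := by
  have key : ∀ θ : ℝ, Real.cos (n*θ) * Real.cos (m*θ)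
      = (Real.cos (((n:ℝ)+m)*θ) + Real.cos (((n:ℝ)-m)*θ))/2 := by
    intro θ
    rw [show ((n:ℝ)+m)*θ = n*θ + m*θ by ring, show ((n:ℝ)-m)*θ = n*θ - m*θ by ring,
      Real.cos_add, Real.cos_sub]
    ring
  simp_rw [key]
  have hi1 : IntervalIntegrable (fun θ => Real.cos (((n:ℝ)+m)*θ)) MeasureTheory.volume 0 Real.pi :=
    (Real.continuous_cos.comp (continuous_const.mul continuous_id)).intervalIntegrable _ _
  have hi2 : IntervalIntegrable (fun θ => Real.cos (((n:ℝ)-m)*θ)) MeasureTheory.volume 0 Real.pi :=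
    (Real.continuous_cos.comp (continuous_const.mul continuous_id)).intervalIntegrable _ _
  rw [show (fun θ => (Real.cos (((n:ℝ)+m)*θ) + Real.cos (((n:ℝ)-m)*θ))/2)
      = (fun θ => (Real.cos (((n:ℝ)+m)*θ) + Real.cos (((n:ℝ)-m)*θ)) * (1/2)) by funext; ring]
  rw [intervalIntegral.integral_mul_const, intervalIntegral.integral_add hi1 hi2]
  have e1 : (∫ θ in (0:ℝ)..Real.pi, Real.cos (((n:ℝ)+m)*θ))
      = if n + m = 0 then Real.pi else 0 := by
    by_cases h : n + m = 0
    · simp [h, Nat.add_eq_zero.1 h |>.1, Nat.add_eq_zero.1 h |>.2]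
    · have hk : ((n:ℝ)+m) ≠ 0 := by
        have : (0:ℝ) < (n:ℝ)+m := by exact_mod_cast Nat.pos_of_ne_zero h
        linarith
      rw [integral_cos_smul _ hk]
      have : Real.sin (((n:ℝ)+m)*Real.pi) = 0 := by
        have := Real.sin_nat_mul_pi (n+m)
        push_cast at this ⊢
        exact this
      simp [h, this]
      intro h1 h2
      exact absurd (by omega : n + m = 0) h
  have e2 : (∫ θ in (0:ℝ)..Real.pi, Real.cos (((n:ℝ)-m)*θ))
      = if n = m then Real.pi else 0 := by
    by_cases h : n = m
    · simp [h]
    · have hk : ((n:ℝ)-m) ≠ 0 := by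
        intro hc
        apply h
        have : (n:ℝ) = m := by linarith
        exact_mod_cast this
      rw [integral_cos_smul _ hk]
      have : Real.sin (((n:ℝ)-m)*Real.pi) = 0 := by
        have := Real.sin_int_mul_pi ((n:ℤ)-m)
        push_cast at this
        exact this
      simp [h, this]
  rw [e1, e2]
  by_cases h' : n = m
  · subst h'
    by_cases h0 : n = 0
    · subst h0
      norm_num
      ring
    · have hnn : n + n ≠ 0 := by omega
      simp only [hnn, h0, if_false, if_true, if_neg, eq_self_iff_true]
      ring
  · have : n + m ≠ 0 ∨ (n = 0 ∧ m = 0) := by omega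
    have hnm : n + m ≠ 0 := by
      rcases this with h|⟨h1,h2⟩
      · exact h
      · exact absurd (h1.trans h2.symm) h'
    simp [h', hnm]
    intro h1 h2
    exact hnm (by omega)


theorem a_eval {β : ℝ} (hβ : 1 < β)
    (p : Polynomial ℝ)
    (hp : p = C ((β ^ 2 - 1)⁻¹) * (X ^ 4 - C (2 * β) * X ^ 2 + 1))
    (a b : ℕ → Polynomial ℝ)
    (ha1 : a 1 = C (Real.sqrt (2 * (β - 1)))⁻¹ * (X ^ 2 - 1))
    (hb0 : b 0 = C (Real.sqrt ((β + 1) / 2)))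
    (ha0 : a 0 = 1)
    (hdef : ∀ n : ℕ,
      AdjoinRoot.of ((X : Polynomial (Polynomial ℝ)) ^ 2 - C p) (a (n + 1)) +
        AdjoinRoot.of (X ^ 2 - C p) (b n) * AdjoinRoot.root (X ^ 2 - C p) =
      (AdjoinRoot.of (X ^ 2 - C p) (a 1) +
        AdjoinRoot.of (X ^ 2 - C p) (b 0) * AdjoinRoot.root (X ^ 2 - C p)) ^ (n + 1)) :
    ∀ (n : ℕ) (θ : ℝ), (a n).eval (phi β θ) = (phi β θ)^n * Real.cos (n*θ) := by
  intro n θ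
  cases n with
  | zero => simp [ha0]
  | succ n =>
    set t := phi β θ with htdef
    have ht : 0 < t := phi_pos β θ
    set r : ℝ := t * Real.sin θ * Real.sqrt (2/(β+1)) with hr
    set i : Polynomial ℝ →+* ℂ := Complex.ofRealHom.comp (evalRingHom t) with hi
    set x : ℂ := (r : ℂ) * Complex.I with hx
    have hβ1 : (0:ℝ) < β + 1 := by linarith
    have hpev : p.eval t = -(2 * t^2 * (Real.sin θ)^2 / (β+1)) := by
      rw [hp]
      simp only [eval_mul, eval_C, eval_add, eval_sub, eval_pow, eval_X, eval_one]
      rw [show t^4 - 2*β*t^2 + 1 = -(2*(β-1)*t^2*(Real.sin θ)^2) from quartic_phi hβ θ]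
      have hβ2 : β^2 - 1 ≠ 0 := by nlinarith
      field_simp
      ring
    have hsq2 : (Real.sqrt (2/(β+1)))^2 = 2/(β+1) := Real.sq_sqrt (by positivity)
    have hieval : ∀ q : Polynomial ℝ, i q = ((q.eval t : ℝ) : ℂ) := by
      intro q; rw [hi, RingHom.comp_apply, coe_evalRingHom]; rfl
    have hroot : ((X : Polynomial (Polynomial ℝ)) ^ 2 - C p).eval₂ i x = 0 := by
      simp only [eval₂_sub, eval₂_pow, eval₂_X, eval₂_C]
      rw [hieval p, hpev, hx]
      have hx2 : ((r:ℂ) * Complex.I)^2 = -((r^2 : ℝ) : ℂ) := by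
        rw [mul_pow, Complex.I_sq]; push_cast; ring
      rw [hx2, ← Complex.ofReal_neg, ← Complex.ofReal_sub, Complex.ofReal_eq_zero]
      rw [hr]
      linear_combination (-(t^2*(Real.sin θ)^2)) * hsq2
    set ψ : AdjoinRoot ((X : Polynomial (Polynomial ℝ)) ^ 2 - C p) →+* ℂ :=
      AdjoinRoot.lift i x hroot with hψ
    have happ := congrArg ψ (hdef n)
    simp only [map_add, map_mul, map_pow, hψ, AdjoinRoot.lift_of, AdjoinRoot.lift_root] at happ
    rw [hieval, hieval, hieval, hieval] at happ
    have hKpos : 0 < Real.sqrt (2*(β-1)) := Real.sqrt_pos.2 (by nlinarith)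
    have ha1t : (a 1).eval t = t * Real.cos θ := by
      rw [ha1]
      simp only [eval_mul, eval_C, eval_sub, eval_pow, eval_X, eval_one]
      set K := Real.sqrt (2*(β-1)) with hK
      have hps := phi_sq β θ
      rw [← htdef, ← hK] at hps
      rw [show t^2 - 1 = K * (t * Real.cos θ) by nlinarith [hps]]
      exact inv_mul_cancel_left₀ hKpos.ne' _
    have hb0t : (b 0).eval t = Real.sqrt ((β+1)/2) := by rw [hb0]; simp
    have hprod : Real.sqrt ((β+1)/2) * Real.sqrt (2/(β+1)) = 1 := by
      rw [← Real.sqrt_mul (by positivity)]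
      rw [show (β+1)/2 * (2/(β+1)) = 1 by field_simp]
      exact Real.sqrt_one
    have hsr : Real.sqrt ((β+1)/2) * r = t * Real.sin θ := by
      rw [hr]
      linear_combination (t * Real.sin θ) * hprod
    have hbase : (((a 1).eval t : ℝ) : ℂ) + (((b 0).eval t : ℝ) : ℂ) * x = (t : ℂ) * Complex.exp (θ * Complex.I) := by
      rw [ha1t, hb0t, hx, Complex.exp_mul_I, ← Complex.ofReal_cos, ← Complex.ofReal_sin]
      have h1 : (Real.sqrt ((β+1)/2) : ℂ) * ((r:ℂ) * Complex.I) = ((t * Real.sin θ : ℝ) : ℂ) * Complex.I := by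
        rw [← hsr]; push_cast; ring
      rw [h1]; push_cast; ring
    rw [hbase] at happ
    have hpow : ((t:ℂ) * Complex.exp (θ * Complex.I))^(n+1)
        = ((t^(n+1) : ℝ) : ℂ) * Complex.exp ((((n+1 : ℕ) : ℝ) * θ : ℝ) * Complex.I) := by
      rw [mul_pow, ← Complex.exp_nat_mul]
      push_cast
      ring_nf
    rw [hpow] at happ
    have := congrArg Complex.re happ
    simp only [Complex.add_re, Complex.ofReal_re, Complex.mul_re, Complex.ofReal_im,
      Complex.I_re, Complex.I_im, Complex.mul_im, Complex.exp_ofReal_mul_I_re,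
      mul_zero, zero_mul, sub_zero, add_zero, zero_sub, mul_one] at this
    rw [hx] at this
    simp only [Complex.mul_re, Complex.mul_im, Complex.ofReal_re, Complex.ofReal_im,
      Complex.I_re, Complex.I_im, mul_zero, zero_mul, sub_zero, mul_one, add_zero, zero_add] at this
    exact this


lemma sub_inv_le {u v : ℝ} (hu : 0 < u) (hv : 0 < v) (h : u - 1/u ≤ v - 1/v) : u ≤ v := by
  by_contra hc
  push_neg at hc
  exact absurd h (not_le.2 (sub_inv_lt hv hc))

lemma sub_inv_lt_rev {u v : ℝ} (hu : 0 < u) (hv : 0 < v) (h : u - 1/u < v - 1/v) : u < v := by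
  by_contra hc
  push_neg at hc
  rcases eq_or_lt_of_le hc with h'|h'
  · rw [h'] at h; exact lt_irrefl _ h
  · exact absurd h (not_lt.2 (sub_inv_lt hv h').le)


lemma core_bound {x y L c : ℝ} (hx : 0 < x) (hy : 0 < y) (hL : x + y = L) (hc : 0 ≤ c) :
    c / (Real.sqrt x * Real.sqrt y) ≤ (c * Real.sqrt (2/L)) * (x^(-(1:ℝ)/2) + y^(-(1:ℝ)/2)) := by
  have hLpos : 0 < L := by linarith
  have rx : x^(-(1:ℝ)/2) = (Real.sqrt x)⁻¹ := by
    rw [Real.sqrt_eq_rpow, ← Real.rpow_neg hx.le]; norm_num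
  have ry : y^(-(1:ℝ)/2) = (Real.sqrt y)⁻¹ := by
    rw [Real.sqrt_eq_rpow, ← Real.rpow_neg hy.le]; norm_num
  have e1 : (Real.sqrt (L/2))⁻¹ = Real.sqrt (2/L) := by
    rw [← Real.sqrt_inv]; congr 1; rw [inv_div]
  rcases le_total x y with hxy | hxy
  · have hy2 : L/2 ≤ y := by linarith
    calc c / (Real.sqrt x * Real.sqrt y)
        ≤ c / (Real.sqrt x * Real.sqrt (L/2)) := by
          gcongr
      _ = (c * Real.sqrt (2/L)) * x^(-(1:ℝ)/2) := by
          rw [rx, div_eq_mul_inv, mul_inv, ← e1]; ring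
      _ ≤ (c * Real.sqrt (2/L)) * (x^(-(1:ℝ)/2) + y^(-(1:ℝ)/2)) := by
          have h1 : 0 ≤ y^(-(1:ℝ)/2) := Real.rpow_nonneg hy.le _
          have h2 : 0 ≤ c * Real.sqrt (2/L) := by positivity
          nlinarith
  · have hx2 : L/2 ≤ x := by linarith
    calc c / (Real.sqrt x * Real.sqrt y)
        ≤ c / (Real.sqrt (L/2) * Real.sqrt y) := by
          gcongr
      _ = (c * Real.sqrt (2/L)) * y^(-(1:ℝ)/2) := by
          rw [ry, div_eq_mul_inv, mul_inv, ← e1]; ring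
      _ ≤ (c * Real.sqrt (2/L)) * (x^(-(1:ℝ)/2) + y^(-(1:ℝ)/2)) := by
          have h1 : 0 ≤ x^(-(1:ℝ)/2) := Real.rpow_nonneg hx.le _
          have h2 : 0 ≤ c * Real.sqrt (2/L) := by positivity
          nlinarith

set_option maxHeartbeats 4000000 in
theorem main_integral {β : ℝ} (hβ : 1 < β) (A : ℕ → Polynomial ℝ)
    (hae : ∀ (k : ℕ) (θ : ℝ), (A k).eval (phi β θ) = (phi β θ)^k * Real.cos (k*θ))
    (n m : ℕ) :
    (∫ t in ((Real.sqrt (β + 1) - Real.sqrt (β - 1)) / Real.sqrt 2)..((Real.sqrt (β + 1) + Real.sqrt (β - 1)) / Real.sqrt 2),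
        (A n).eval t * (A m).eval t * (t ^ 2 + 1) *
          Real.sqrt ((1 - β) / (t ^ 4 - 2 * β * t ^ 2 + 1)) / t ^ (n + m + 1))
      = Real.sqrt (β-1) * (if n = m then (if n = 0 then Real.pi else Real.pi/2) else 0) := by
  set tm := (Real.sqrt (β + 1) - Real.sqrt (β - 1)) / Real.sqrt 2 with htm_def
  set tp := (Real.sqrt (β + 1) + Real.sqrt (β - 1)) / Real.sqrt 2 with htp_def
  set F : ℝ → ℝ := fun t => (A n).eval t * (A m).eval t * (t ^ 2 + 1) *
      Real.sqrt ((1 - β) / (t ^ 4 - 2 * β * t ^ 2 + 1)) / t ^ (n + m + 1) with hF_def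
  set K := Real.sqrt (2*(β-1)) with hK_def
  clear_value tm tp F K
  have hKpos : 0 < K := by rw [hK_def]; exact Real.sqrt_pos.2 (by nlinarith)
  have hK2 : K^2 = 2*(β-1) := by rw [hK_def]; exact Real.sq_sqrt (by nlinarith)
  have htm : 0 < tm := by rw [htm_def]; exact tm_pos hβ
  have htp : 0 < tp := by rw [htp_def]; exact tp_pos hβ
  have htmtp : tm * tp = 1 := by rw [htm_def, htp_def]; exact tm_mul_tp hβ
  have hdiff : tp - tm = K := by rw [htm_def, htp_def, hK_def]; exact tp_sub_tm hβ
  have htmlt : tm < tp := by nlinarith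
  have hsum : tm^2 + tp^2 = 2*β := by nlinarith
  have hqfact : ∀ t : ℝ, -(t^4 - 2*β*t^2 + 1) = (t^2 - tm^2)*(tp^2 - t^2) := by
    intro t
    linear_combination (-t^2)*hsum + (tm*tp+1)*htmtp
  have htpinv : 1/tp = tm := (eq_one_div_of_mul_eq_one_left htmtp).symm
  have htminv : 1/tm = tp := (eq_one_div_of_mul_eq_one_left (by rw [mul_comm]; exact htmtp)).symm
  have htmK : tm - 1/tm = K * (-1) := by rw [htminv]; linarith
  have htpK : tp - 1/tp = K * 1 := by rw [htpinv]; linarith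
  -- membership facts
  have hmem_Icc : ∀ θ : ℝ, phi β θ ∈ Icc tm tp := by
    intro θ
    have h1 := phi_key β θ
    rw [← hK_def] at h1
    constructor
    · apply sub_inv_le htm (phi_pos β θ)
      rw [htmK, h1]
      have := Real.neg_one_le_cos θ
      nlinarith
    · apply sub_inv_le (phi_pos β θ) htp
      rw [htpK, h1]
      have := Real.cos_le_one θ
      nlinarith
  have hmem_Ioo : ∀ θ ∈ Ioo (0:ℝ) Real.pi, phi β θ ∈ Ioo tm tp := by
    intro θ hθ
    have h1 := phi_key β θ
    rw [← hK_def] at h1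
    have hc1 : Real.cos θ < 1 := by
      have := Real.cos_lt_cos_of_nonneg_of_le_pi (le_refl 0) hθ.2.le hθ.1
      rwa [Real.cos_zero] at this
    have hc2 : -1 < Real.cos θ := by
      have := Real.cos_lt_cos_of_nonneg_of_le_pi hθ.1.le (le_refl Real.pi) hθ.2
      rwa [Real.cos_pi] at this
    constructor
    · apply sub_inv_lt_rev htm (phi_pos β θ)
      rw [htmK, h1]; nlinarith
    · apply sub_inv_lt_rev (phi_pos β θ) htp
      rw [htpK, h1]; nlinarith
  have hsurj : ∀ t ∈ Ioo tm tp, ∃ θ ∈ Ioo (0:ℝ) Real.pi, phi β θ = t := by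
    intro t ht
    have ht0 : 0 < t := lt_trans htm ht.1
    have hb1 : K * (-1) < t - 1/t := by rw [← htmK]; exact sub_inv_lt htm ht.1
    have hb2 : t - 1/t < K * 1 := by rw [← htpK]; exact sub_inv_lt ht0 ht.2
    set c := (t - 1/t)/K with hc_def
    have hc1 : -1 < c := by rw [hc_def]; rw [lt_div_iff₀ hKpos]; nlinarith
    have hc2 : c < 1 := by rw [hc_def]; rw [div_lt_iff₀ hKpos]; nlinarith
    refine ⟨Real.arccos c, ⟨Real.arccos_pos.2 hc2, ?_⟩, ?_⟩
    · rcases lt_or_eq_of_le (Real.arccos_le_pi c) with h|h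
      · exact h
      · exfalso
        have := Real.cos_arccos hc1.le hc2.le
        rw [h, Real.cos_pi] at this
        linarith
    · symm
      apply phi_char _ ht0
      rw [← hK_def, Real.cos_arccos hc1.le hc2.le, hc_def]
      field_simp
  have hQpos : ∀ t ∈ Ioo tm tp, 0 < (t - tm)*(tp - t) := by
    intro t ht
    exact mul_pos (sub_pos.2 ht.1) (sub_pos.2 ht.2)
  have hQle : ∀ t ∈ Ioo tm tp, (t - tm)*(tp - t) ≤ -(t^4 - 2*β*t^2 + 1) := by
    intro t ht
    rw [hqfact t]
    have h1 : tm < t := ht.1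
    have h2 : t < tp := ht.2
    have e : (t^2 - tm^2)*(tp^2 - t^2) - (t - tm)*(tp - t)
        = (t - tm)*(tp - t)*((t + tm)*(tp + t) - 1) := by ring
    have e2 : (1:ℝ) ≤ (t + tm)*(tp + t) := by nlinarith [htm, htp, htmtp]
    nlinarith [mul_pos (sub_pos.2 h1) (sub_pos.2 h2), e2]
  have hqneg : ∀ t ∈ Ioo tm tp, t^4 - 2*β*t^2 + 1 < 0 := by
    intro t ht
    have := hQle t ht
    have := hQpos t ht
    linarith
  have habs : ∀ (k : ℕ), ∀ t ∈ Ioo tm tp, |(A k).eval t| ≤ t^k := by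
    intro k t ht
    obtain ⟨θ, hθ, hphit⟩ := hsurj t ht
    rw [← hphit, hae k θ, abs_mul, abs_pow, abs_of_pos (phi_pos β θ)]
    exact mul_le_of_le_one_right (pow_nonneg (phi_pos β θ).le k) (Real.abs_cos_le_one _)
  set M := (tp^2+1)/tm * (Real.sqrt (β-1) * Real.sqrt (2/(tp-tm))) with hM_def
  have hFbound : ∀ t ∈ Ioo tm tp,
      |F t| ≤ M * ((t-tm)^(-(1:ℝ)/2) + (tp-t)^(-(1:ℝ)/2)) := by
    intro t ht
    have ht0 : 0 < t := lt_trans htm ht.1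
    have h1 : 0 < t - tm := sub_pos.2 ht.1
    have h2 : 0 < tp - t := sub_pos.2 ht.2
    have hs1 : Real.sqrt ((1-β)/(t^4-2*β*t^2+1))
        ≤ Real.sqrt (β-1) / (Real.sqrt (t-tm) * Real.sqrt (tp-t)) := by
      rw [show (1-β)/(t^4-2*β*t^2+1) = (β-1)/(-(t^4-2*β*t^2+1)) by rw [div_neg, ← neg_div, neg_sub]]
      calc Real.sqrt ((β-1)/(-(t^4-2*β*t^2+1)))
          ≤ Real.sqrt ((β-1)/((t-tm)*(tp-t))) := by
            apply Real.sqrt_le_sqrt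
            exact div_le_div_of_nonneg_left (by linarith) (hQpos t ht) (hQle t ht)
        _ = Real.sqrt (β-1) / (Real.sqrt (t-tm) * Real.sqrt (tp-t)) := by
            rw [Real.sqrt_div (by linarith : (0:ℝ) ≤ β-1), Real.sqrt_mul h1.le]
    have hev : |F t| ≤ (t^2+1) * Real.sqrt ((1-β)/(t^4-2*β*t^2+1)) / t := by
      rw [hF_def]
      dsimp only
      rw [abs_div, abs_of_pos (pow_pos ht0 (n+m+1)), abs_mul, abs_mul, abs_mul,
        abs_of_nonneg (Real.sqrt_nonneg _), abs_of_pos (show (0:ℝ) < t^2+1 by positivity)]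
      rw [div_le_div_iff₀ (pow_pos ht0 (n+m+1)) ht0]
      have hnm : |(A n).eval t| * |(A m).eval t| ≤ t^n * t^m :=
        mul_le_mul (habs n t ht) (habs m t ht) (abs_nonneg _) (pow_nonneg ht0.le n)
      calc |(A n).eval t| * |(A m).eval t| * (t^2+1) * Real.sqrt ((1-β)/(t^4-2*β*t^2+1)) * t
          = (|(A n).eval t| * |(A m).eval t|) * ((t^2+1) * Real.sqrt ((1-β)/(t^4-2*β*t^2+1)) * t) := by
            ring
        _ ≤ (t^n * t^m) * ((t^2+1) * Real.sqrt ((1-β)/(t^4-2*β*t^2+1)) * t) := by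
            apply mul_le_mul_of_nonneg_right hnm
            positivity
        _ = (t^2+1) * Real.sqrt ((1-β)/(t^4-2*β*t^2+1)) * t^(n+m+1) := by
            rw [pow_succ, pow_add]; ring
    calc |F t| ≤ (t^2+1) * Real.sqrt ((1-β)/(t^4-2*β*t^2+1)) / t := hev
      _ = (t^2+1)/t * Real.sqrt ((1-β)/(t^4-2*β*t^2+1)) := by ring
      _ ≤ (tp^2+1)/tm * (Real.sqrt (β-1) / (Real.sqrt (t-tm) * Real.sqrt (tp-t))) := by
          apply mul_le_mul _ hs1 (Real.sqrt_nonneg _) (by positivity)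
          apply div_le_div₀ (by positivity) (by nlinarith [ht.2, ht0, htp]) htm ht.1.le
      _ ≤ (tp^2+1)/tm * ((Real.sqrt (β-1) * Real.sqrt (2/(tp-tm))) * ((t-tm)^(-(1:ℝ)/2) + (tp-t)^(-(1:ℝ)/2))) := by
          apply mul_le_mul_of_nonneg_left _ (by positivity)
          exact core_bound h1 h2 (by ring) (Real.sqrt_nonneg _)
      _ = M * ((t-tm)^(-(1:ℝ)/2) + (tp-t)^(-(1:ℝ)/2)) := by
          rw [hM_def]; ring
  have hIbound : IntegrableOn
      (fun t => M * ((t-tm)^(-(1:ℝ)/2) + (tp-t)^(-(1:ℝ)/2))) (Ioo tm tp) := by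
    have i1 : IntervalIntegrable (fun x : ℝ => x ^ (-(1:ℝ)/2)) volume 0 (tp - tm) :=
      intervalIntegral.intervalIntegrable_rpow' (by norm_num)
    have i2 := i1.comp_sub_right tm
    have i3 := i1.comp_sub_left tp
    rw [zero_add, sub_add_cancel] at i2
    rw [sub_zero, sub_sub_cancel] at i3
    have i4 : IntervalIntegrable
        (fun t : ℝ => M * ((t-tm)^(-(1:ℝ)/2) + (tp-t)^(-(1:ℝ)/2))) volume tm tp :=
      (i2.add i3.symm).const_mul M
    exact (intervalIntegrable_iff_integrableOn_Ioo_of_le htmlt.le).1 i4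
  have hFmeas : AEStronglyMeasurable F (volume.restrict (Ioo tm tp)) := by
    apply Measurable.aestronglyMeasurable
    rw [hF_def]
    have h1 : Measurable fun t : ℝ => (A n).eval t := (Polynomial.continuous _).measurable
    have h2 : Measurable fun t : ℝ => (A m).eval t := (Polynomial.continuous _).measurable
    have h3 : Measurable fun t : ℝ => t^2 + 1 := by measurability
    have h4 : Measurable fun t : ℝ => Real.sqrt ((1-β)/(t^4-2*β*t^2+1)) := by
      apply Real.continuous_sqrt.measurable.comp
      apply Measurable.div measurable_const
      measurability
    have h5 : Measurable fun t : ℝ => t^(n+m+1) := by measurability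
    exact (((h1.mul h2).mul h3).mul h4).div h5
  have hFInt : IntegrableOn F (Ioo tm tp) := by
    apply Integrable.mono' hIbound hFmeas
    rw [ae_restrict_iff' measurableSet_Ioo]
    filter_upwards with t htt
    rw [Real.norm_eq_abs]
    exact hFbound t htt
  have hFIntIcc : IntegrableOn F (Icc tm tp) :=
    hFInt.congr_set_ae Ioo_ae_eq_Icc.symm
  have hFcont : ContinuousOn F (Ioo tm tp) := by
    intro t ht
    apply ContinuousAt.continuousWithinAt
    have hq := (hqneg t ht).ne
    have ht0 : t ≠ 0 := (lt_trans htm ht.1).ne'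
    rw [hF_def]
    have c1 : ContinuousAt (fun t : ℝ => (A n).eval t * (A m).eval t * (t^2+1) *
        Real.sqrt ((1-β)/(t^4-2*β*t^2+1))) t := by
      apply ContinuousAt.mul
      · fun_prop
      · exact Real.continuous_sqrt.continuousAt.comp
          (ContinuousAt.div continuousAt_const (by fun_prop) hq)
    have c2 : ContinuousAt (fun t : ℝ => t^(n+m+1)) t := by fun_prop
    exact c1.div c2 (pow_ne_zero _ ht0)
  have hpoint : ∀ θ ∈ Ioo (0:ℝ) Real.pi,
      phider β θ * F (phi β θ)
        = -(Real.sqrt (β-1)) * (Real.cos (n*θ) * Real.cos (m*θ)) := by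
    intro θ hθ
    have ht0 : 0 < phi β θ := phi_pos β θ
    have hs : 0 < Real.sin θ := Real.sin_pos_of_pos_of_lt_pi hθ.1 hθ.2
    have hq := quartic_phi hβ θ
    set t := phi β θ with ht_def
    have hsq2 : (Real.sqrt 2)^2 = 2 := Real.sq_sqrt (by norm_num)
    have hsqrt : Real.sqrt ((1-β)/(t^4-2*β*t^2+1)) = (Real.sqrt 2 * t * Real.sin θ)⁻¹ := by
      rw [hq]
      have hthis : (Real.sqrt 2 * t * Real.sin θ)^2 = 2*t^2*(Real.sin θ)^2 := by
        rw [mul_pow, mul_pow, hsq2]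
      have h2 : (1-β)/(-(2*(β-1)*t^2*(Real.sin θ)^2)) = ((Real.sqrt 2 * t * Real.sin θ)^2)⁻¹ := by
        have hden : (0:ℝ) < 2*(β-1)*t^2*(Real.sin θ)^2 := by
          nlinarith [mul_pos (pow_pos ht0 2) (pow_pos hs 2)]
        rw [hthis, inv_eq_one_div, div_eq_div_iff (neg_ne_zero.2 hden.ne') (by positivity)]
        ring
      rw [h2, Real.sqrt_inv, Real.sqrt_sq (by positivity)]
    have hKs : K = Real.sqrt 2 * Real.sqrt (β-1) := by
      rw [hK_def, Real.sqrt_mul (by norm_num)]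
    have hder : phider β θ = -(K * Real.sin θ) * t^2 / (t^2 + 1) := by
      rw [phider, ← ht_def, ← hK_def]
    rw [hF_def]
    dsimp only
    rw [hae n θ, hae m θ, ← ht_def, hsqrt, hder]
    have htne : t ≠ 0 := ht0.ne'
    have h2ne : Real.sqrt 2 ≠ 0 := by positivity
    have hsne : Real.sin θ ≠ 0 := hs.ne'
    have ht21 : t^2 + 1 ≠ 0 := by positivity
    rw [show n+m+1 = n+(m+1) from rfl, pow_add, pow_succ]
    field_simp
    rw [hKs]
    ring
  have hmin : min (0:ℝ) Real.pi = 0 := min_eq_left Real.pi_pos.le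
  have hmax : max (0:ℝ) Real.pi = Real.pi := max_eq_right Real.pi_pos.le
  have hf : ContinuousOn (phi β) (Set.uIcc 0 Real.pi) :=
    fun x _ => (phi_hasDeriv β x).continuousAt.continuousWithinAt
  have hff' : ∀ x ∈ Ioo (min (0:ℝ) Real.pi) (max 0 Real.pi),
      HasDerivWithinAt (phi β) (phider β x) (Ioi x) x :=
    fun x _ => (phi_hasDeriv β x).hasDerivWithinAt
  have hgcont : ContinuousOn F (phi β '' Ioo (min (0:ℝ) Real.pi) (max 0 Real.pi)) := by
    rw [hmin, hmax]
    apply hFcont.mono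
    rintro y ⟨θ, hθ, rfl⟩
    exact hmem_Ioo θ hθ
  have hg1 : IntegrableOn F (phi β '' Set.uIcc 0 Real.pi) := by
    apply hFIntIcc.mono_set
    rintro y ⟨θ, _, rfl⟩
    exact hmem_Icc θ
  set G : ℝ → ℝ := fun θ => -(Real.sqrt (β-1)) * (Real.cos (n*θ) * Real.cos (m*θ)) with hG_def
  have hGcont : Continuous G := by rw [hG_def]; fun_prop
  have hg2 : IntegrableOn (fun x => phider β x • F (phi β x)) (Set.uIcc 0 Real.pi) := by
    rw [uIcc_of_le Real.pi_pos.le]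
    have hGIoo : IntegrableOn G (Ioo 0 Real.pi) :=
      (hGcont.integrableOn_Icc).mono_set Ioo_subset_Icc_self
    have : IntegrableOn (fun x => phider β x • F (phi β x)) (Ioo 0 Real.pi) := by
      apply hGIoo.congr
      rw [Filter.EventuallyEq, ae_restrict_iff' measurableSet_Ioo]
      filter_upwards with θ hθ
      rw [smul_eq_mul]
      exact (hpoint θ hθ).symm
    exact this.congr_set_ae Ioo_ae_eq_Icc.symm
  have hsubst := intervalIntegral.integral_comp_smul_deriv''' hf hff' hgcont hg1 hg2
  simp only [Function.comp] at hsubst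
  rw [phi_zero hβ, phi_pi hβ, ← htp_def, ← htm_def] at hsubst
  have hLHS : (∫ x in (0:ℝ)..Real.pi, phider β x • F (phi β x))
      = ∫ θ in (0:ℝ)..Real.pi, G θ := by
    apply intervalIntegral.integral_congr_ae
    have hne : ∀ᵐ x : ℝ ∂volume, x ≠ Real.pi := by
      rw [MeasureTheory.ae_iff]
      have he : {x : ℝ | ¬ x ≠ Real.pi} = {Real.pi} := by ext x; simp
      rw [he]
      exact measure_singleton _
    filter_upwards [hne] with x hx hxI
    rw [Set.uIoc_of_le Real.pi_pos.le] at hxI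
    have hxIoo : x ∈ Ioo (0:ℝ) Real.pi := ⟨hxI.1, lt_of_le_of_ne hxI.2 hx⟩
    rw [smul_eq_mul]
    exact hpoint x hxIoo
  have hG : (∫ θ in (0:ℝ)..Real.pi, G θ)
      = -(Real.sqrt (β-1)) * (if n = m then (if n = 0 then Real.pi else Real.pi/2) else 0) := by
    rw [hG_def]
    rw [intervalIntegral.integral_const_mul, integral_coscos n m]
  rw [hLHS, hG, intervalIntegral.integral_symm tm tp] at hsubst
  linarith [hsubst]


/-- Orthogonality of the first-kind family in the DJKM setting. -/
theorem djkm_orthogonality_first (β : ℝ) (hβ : 1 < β)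
    (p : Polynomial ℝ)
    (hp : p = C ((β ^ 2 - 1)⁻¹) * (X ^ 4 - C (2 * β) * X ^ 2 + 1))
    (a b : ℕ → Polynomial ℝ)
    (ha1 : a 1 = C (Real.sqrt (2 * (β - 1)))⁻¹ * (X ^ 2 - 1))
    (hb0 : b 0 = C (Real.sqrt ((β + 1) / 2)))
    (ha0 : a 0 = 1)
    (hdef : ∀ n : ℕ,
      AdjoinRoot.of ((X : Polynomial (Polynomial ℝ)) ^ 2 - C p) (a (n + 1)) +
        AdjoinRoot.of (X ^ 2 - C p) (b n) * AdjoinRoot.root (X ^ 2 - C p) =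
      (AdjoinRoot.of (X ^ 2 - C p) (a 1) +
        AdjoinRoot.of (X ^ 2 - C p) (b 0) * AdjoinRoot.root (X ^ 2 - C p)) ^ (n + 1)) :
    ∀ n m : ℕ,
      (n ≠ m →
        (∫ t in ((Real.sqrt (β + 1) - Real.sqrt (β - 1)) / Real.sqrt 2)..((Real.sqrt (β + 1) + Real.sqrt (β - 1)) / Real.sqrt 2),
          (a n).eval t * (a m).eval t * (t ^ 2 + 1) *
            Real.sqrt ((1 - β) / (t ^ 4 - 2 * β * t ^ 2 + 1)) / t ^ (n + m + 1)) = 0) ∧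
      (n = 0 → m = 0 →
        (∫ t in ((Real.sqrt (β + 1) - Real.sqrt (β - 1)) / Real.sqrt 2)..((Real.sqrt (β + 1) + Real.sqrt (β - 1)) / Real.sqrt 2),
          (a n).eval t * (a m).eval t * (t ^ 2 + 1) *
            Real.sqrt ((1 - β) / (t ^ 4 - 2 * β * t ^ 2 + 1)) / t ^ (n + m + 1)) = Real.pi * Real.sqrt (β - 1)) ∧
      (n = m → n ≠ 0 →
        (∫ t in ((Real.sqrt (β + 1) - Real.sqrt (β - 1)) / Real.sqrt 2)..((Real.sqrt (β + 1) + Real.sqrt (β - 1)) / Real.sqrt 2),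
          (a n).eval t * (a m).eval t * (t ^ 2 + 1) *
            Real.sqrt ((1 - β) / (t ^ 4 - 2 * β * t ^ 2 + 1)) / t ^ (n + m + 1)) = Real.pi / 2 * Real.sqrt (β - 1)) := by
  intro n m
  have hae := a_eval hβ p hp a b ha1 hb0 ha0 hdef
  have hmain := main_integral hβ a hae n m
  refine ⟨?_, ?_, ?_⟩
  · intro hnm
    rw [hmain, if_neg hnm, mul_zero]
  · intro hn hm
    subst hn; subst hm
    rw [hmain]
    simp
    ring
  · intro hnm hn0
    rw [hmain, if_pos hnm, if_neg hn0]
    ring
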